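/- Let (T,F) be a graph-labelled tree of a connected graph G, let l be a leaf of T, and let e = uv and e' = uv' be distinct tree-edges incident to a node u that is l-accessible, with e on the u,l-path in T. Then ρ_u(e) and ρ_u(e') are adjacent in G_u if and only if there exists an l-accessible leaf l' in the subtree of T − e' containing v'. -/

import Mathlib

open SimpleGraph

variable {V : Type}

/-- A vertex of a tree is a leaf if it has exactly one neighbour. -/
def IsLeaf (T : SimpleGraph V) (v : V) : Prop := ∃! w, T.Adj v w

/-- Admissibility of a walk in a graph-labelled tree: at every internal vertex of the
walk, the marker vertices corresponding to the two consecutive tree-edges are adjacent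
in the label graph. -/
inductive Admissible (T : SimpleGraph V) (F : ∀ v : V, SimpleGraph (T.neighborSet v)) :
    ∀ {a b : V}, T.Walk a b → Prop
  | nil {a : V} : Admissible T F (SimpleGraph.Walk.nil : T.Walk a a)
  | single {a b : V} (h : T.Adj a b) :
      Admissible T F (SimpleGraph.Walk.cons h SimpleGraph.Walk.nil)
  | cons {a v b c : V} (h1 : T.Adj a v) (h2 : T.Adj v b) (p : T.Walk b c)
      (hadj : (F v).Adj ⟨a, h1.symm⟩ ⟨b, h2⟩)
      (hp : Admissible T F (SimpleGraph.Walk.cons h2 p)) :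
      Admissible T F (SimpleGraph.Walk.cons h1 (SimpleGraph.Walk.cons h2 p))

/-- `b` is accessible from `a`: the (unique) path joining them is admissible. -/
def Accessible (T : SimpleGraph V) (F : ∀ v : V, SimpleGraph (T.neighborSet v))
    (a b : V) : Prop :=
  ∃ p : T.Walk a b, p.IsPath ∧ Admissible T F p

/-- The accessibility graph of a graph-labelled tree: vertices are the leaves of the
tree, two leaves being adjacent iff one is accessible from the other. -/
def accGraph (T : SimpleGraph V) (F : ∀ v : V, SimpleGraph (T.neighborSet v)) :
    SimpleGraph {v : V // IsLeaf T v} :=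
  SimpleGraph.fromRel (fun x y => Accessible T F ↑x ↑y)

variable {T : SimpleGraph V} {F : ∀ v : V, SimpleGraph (T.neighborSet v)}


lemma adm_tail {a b c : V} {h : T.Adj a b} {p : T.Walk b c}
    (hp : Admissible T F (Walk.cons h p)) : Admissible T F p := by
  cases hp with
  | single => exact .nil
  | cons _ _ _ _ hp => exact hp

lemma adm_cons_cons_iff {a v b c : V} (h1 : T.Adj a v) (h2 : T.Adj v b) (p : T.Walk b c) :
    Admissible T F (Walk.cons h1 (Walk.cons h2 p)) ↔
      (F v).Adj ⟨a, h1.symm⟩ ⟨b, h2⟩ ∧ Admissible T F (Walk.cons h2 p) := by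
  constructor
  · intro h
    cases h with
    | cons _ _ _ hadj hp => exact ⟨hadj, hp⟩
  · rintro ⟨h, h'⟩
    exact .cons _ _ _ h h'

lemma adm_append_iff {l v u v' c : V} (q : T.Walk l v) (hv : T.Adj v u) (hv' : T.Adj u v')
    (r : T.Walk v' c) :
    Admissible T F ((q.concat hv).append (Walk.cons hv' r)) ↔
      Admissible T F (q.concat hv) ∧ (F u).Adj ⟨v, hv.symm⟩ ⟨v', hv'⟩ ∧
        Admissible T F (Walk.cons hv' r) := by
  induction q with
  | nil =>
    simp only [Walk.concat_nil, Walk.cons_append, Walk.nil_append]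
    rw [adm_cons_cons_iff]
    have : Admissible T F (Walk.cons hv (.nil : T.Walk u u)) := .single hv
    tauto
  | cons h q'' ih =>
    cases q'' with
    | nil =>
      simp only [Walk.concat_cons, Walk.concat_nil, Walk.cons_append, Walk.nil_append]
      rw [adm_cons_cons_iff, adm_cons_cons_iff, adm_cons_cons_iff]
      have : Admissible T F (Walk.cons hv (.nil : T.Walk u u)) := .single hv
      tauto
    | cons h2 q3 =>
      simp only [Walk.concat_cons, Walk.cons_append] at ih ⊢
      rw [adm_cons_cons_iff, adm_cons_cons_iff, ih]
      tauto

lemma adm_reverse {a b : V} {p : T.Walk a b} (hp : Admissible T F p) :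
    Admissible T F p.reverse := by
  induction hp with
  | nil => simpa using Admissible.nil
  | single h => simpa using Admissible.single h.symm
  | cons h1 h2 p hadj hp ih =>
    rw [Walk.reverse_cons, ← Walk.concat_eq_append] at ih
    rw [Walk.reverse_cons, Walk.reverse_cons, ← Walk.concat_eq_append]
    exact (adm_append_iff _ _ _ _).mpr ⟨ih, hadj.symm, .single h1.symm⟩

lemma del_not_reach [DecidableEq V] (hT : T.IsTree) {a b : V} (hab : T.Adj a b) :
    ¬ (T.deleteEdges {s(a, b)}).Reachable a b := by
  intro hr
  obtain ⟨p0⟩ := hr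
  obtain ⟨p, hp⟩ := p0.toPath
  have hpe : ∀ e ∈ p.edges, e ∈ T.edgeSet ∧ e ∉ ({s(a, b)} : Set (Sym2 V)) := by
    intro e he
    have := p.edges_subset_edgeSet he
    rwa [edgeSet_deleteEdges] at this
  let pT := p.transfer T (fun e he => (hpe e he).1)
  have hpT : pT.IsPath := hp.transfer _
  have hne : s(b, a) ∉ pT.edges := by
    rw [Walk.edges_transfer]
    intro h
    exact (hpe _ h).2 (by rw [Sym2.eq_swap]; rfl)
  have hcyc := SimpleGraph.Path.cons_isCycle ⟨pT, hpT⟩ hab.symm hne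
  exact hT.2 _ hcyc

lemma reach_del_of_mem_support [DecidableEq V] {u v' a b z : V} (p : T.Walk a b)
    (hfree : s(u, v') ∉ p.edges) (hz : z ∈ p.support) :
    (T.deleteEdges {s(u, v')}).Reachable z b := by
  have hp : ∀ e ∈ p.edges, e ∉ ({s(u, v')} : Set (Sym2 V)) := by
    intro e he h; rw [Set.mem_singleton_iff] at h; exact hfree (h ▸ he)
  let p' := p.toDeleteEdges {s(u, v')} hp
  have hz' : z ∈ p'.support := by rwa [Walk.support_transfer]
  exact (p'.dropUntil z hz').reachable

lemma reach_del_of_mem_support' [DecidableEq V] {u v' a b z : V} (p : T.Walk a b)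
    (hfree : s(u, v') ∉ p.edges) (hz : z ∈ p.support) :
    (T.deleteEdges {s(u, v')}).Reachable a z := by
  have hp : ∀ e ∈ p.edges, e ∉ ({s(u, v')} : Set (Sym2 V)) := by
    intro e he h; rw [Set.mem_singleton_iff] at h; exact hfree (h ▸ he)
  let p' := p.toDeleteEdges {s(u, v')} hp
  have hz' : z ∈ p'.support := by rwa [Walk.support_transfer]
  exact (p'.takeUntil z hz').reachable

lemma edge_not_mem_of_isPath_concat {l v u v' : V} (q : T.Walk l v) (hv : T.Adj v u)
    (hv' : T.Adj u v') (hne : v' ≠ v) (hq : (q.concat hv).IsPath) :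
    s(u, v') ∉ (q.concat hv).edges := by
  intro h
  rw [Walk.edges_concat, List.concat_eq_append, List.mem_append] at h
  have hu : u ∉ q.support := by
    have := hq.support_nodup
    rw [Walk.support_concat] at this
    exact fun hmem => (List.disjoint_of_nodup_append this) hmem (by simp)
  rcases h with h | h
  · exact hu (q.fst_mem_support_of_mem_edges h)
  · simp only [List.mem_singleton] at h
    rw [Sym2.eq_iff] at h
    rcases h with ⟨h1, _⟩ | ⟨_, h2⟩
    · exact hv.ne h1.symm
    · exact hne h2

lemma comp_subset [DecidableEq V] (hT : T.IsTree) {u v' w : V} (hv' : T.Adj u v')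
    (hw : T.Adj v' w) (hwu : w ≠ u) :
    ∀ z, (T.deleteEdges {s(v', w)}).Reachable w z →
      (T.deleteEdges {s(u, v')}).Reachable v' z := by
  intro z hr
  obtain ⟨p0⟩ := hr
  obtain ⟨p, hp⟩ := p0.toPath
  have hv'p : v' ∉ p.support := by
    intro hmem
    exact del_not_reach hT hw ((p.takeUntil v' hmem).reachable).symm
  have hedges : ∀ e ∈ p.edges, e ∈ (T.deleteEdges {s(u, v')}).edgeSet := by
    intro e he
    have h1 := p.edges_subset_edgeSet he
    rw [edgeSet_deleteEdges] at h1 ⊢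
    refine ⟨h1.1, ?_⟩
    intro hmem
    rw [Set.mem_singleton_iff] at hmem
    subst hmem
    exact hv'p (p.snd_mem_support_of_mem_edges he)
  have hadj : (T.deleteEdges {s(u, v')}).Adj v' w := by
    rw [deleteEdges_adj]
    refine ⟨hw, ?_⟩
    rw [Set.mem_singleton_iff, Sym2.eq_iff]
    rintro (⟨h1, -⟩ | ⟨-, h2⟩)
    · exact hv'.ne h1.symm
    · exact hwu h2
  exact hadj.reachable.trans (p.transfer _ hedges).reachable

lemma leaf_in_comp [Fintype V] [DecidableEq V] (hT : T.IsTree) :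
    ∀ n : ℕ, ∀ u v' : V, T.Adj u v' →
      {z | (T.deleteEdges {s(u, v')}).Reachable v' z}.ncard ≤ n →
      ∃ m, IsLeaf T m ∧ (T.deleteEdges {s(u, v')}).Reachable v' m := by
  intro n
  induction n with
  | zero =>
    intro u v' hv' hcard
    exfalso
    have hmem : v' ∈ {z | (T.deleteEdges {s(u, v')}).Reachable v' z} := Reachable.refl v'
    have := Set.ncard_pos (Set.toFinite _) |>.mpr ⟨v', hmem⟩
    omega
  | succ n ih =>
    intro u v' hv' hcard
    by_cases hleaf : IsLeaf T v'
    · exact ⟨v', hleaf, Reachable.refl v'⟩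
    · have : ∃ w, T.Adj v' w ∧ w ≠ u := by
        simp only [IsLeaf, ExistsUnique] at hleaf
        push_neg at hleaf
        exact hleaf u hv'.symm
      obtain ⟨w, hw, hwu⟩ := this
      have hssub : {z | (T.deleteEdges {s(v', w)}).Reachable w z} ⊂
          {z | (T.deleteEdges {s(u, v')}).Reachable v' z} := by
        constructor
        · intro z hz
          exact comp_subset hT hv' hw hwu z hz
        · intro hsub
          have : (T.deleteEdges {s(v', w)}).Reachable w v' :=
            hsub (Set.mem_setOf.mpr (Reachable.refl v'))
          exact del_not_reach hT hw this.symm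
      have hlt := Set.ncard_lt_ncard hssub (Set.toFinite _)
      obtain ⟨m, hm1, hm2⟩ := ih v' w hw (by omega)
      exact ⟨m, hm1, comp_subset hT hv' hw hwu m hm2⟩

lemma cross_lemma [DecidableEq V] {u v' : V} (hv' : T.Adj u v') :
    ∀ {a b : V} (P : T.Walk a b), P.IsPath → Admissible T F P →
      ¬ (T.deleteEdges {s(u, v')}).Reachable v' a →
      (T.deleteEdges {s(u, v')}).Reachable v' b →
      ∃ r : T.Walk v' b, Admissible T F (Walk.cons hv' r) ∧ (Walk.cons hv' r).IsPath ∧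
        s(u, v') ∉ r.edges := by
  intro a b P
  induction P with
  | nil => exact fun _ _ h1 h2 => absurd h2 h1
  | @cons x y b h P' ih =>
    intro hp hadm ha hb
    by_cases hec : s(x, y) = s(u, v')
    · rw [Sym2.eq_iff] at hec
      rcases hec with ⟨hxu, hyv⟩ | ⟨hxv, hyu⟩
      · subst hxu; subst hyv
        refine ⟨P', hadm, hp, ?_⟩
        intro he
        exact ((Walk.cons_isPath_iff _ _).mp hp).2 (P'.fst_mem_support_of_mem_edges he)
      · subst hxv
        exact absurd (Reachable.refl x) ha
    · have hD : (T.deleteEdges {s(u, v')}).Adj x y := by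
        rw [deleteEdges_adj]
        exact ⟨h, by simpa using hec⟩
      have hy : ¬ (T.deleteEdges {s(u, v')}).Reachable v' y := fun hr =>
        ha (hr.trans hD.reachable.symm)
      exact ih ((Walk.cons_isPath_iff _ _).mp hp).1 (adm_tail hadm) hy hb

lemma back_lemma [DecidableEq V] {u v' : V} (hv' : T.Adj u v') :
    ∀ {a b : V} (P : T.Walk a b), P.IsPath → Admissible T F P →
      ¬ (T.deleteEdges {s(u, v')}).Reachable v' a →
      (T.deleteEdges {s(u, v')}).Reachable v' b →
      a ≠ u →
      ∃ (w : V) (hw : T.Adj w u) (q1 : T.Walk a w), (q1.concat hw).IsPath ∧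
        (∀ z ∈ (q1.concat hw).support, z ∈ P.support) ∧
        (F u).Adj ⟨w, hw.symm⟩ ⟨v', hv'⟩ := by
  intro a b P
  induction P with
  | nil => exact fun _ _ h1 h2 _ => absurd h2 h1
  | @cons x y b h P' ih =>
    intro hp hadm ha hb hxu
    by_cases hec : s(x, y) = s(u, v')
    · rw [Sym2.eq_iff] at hec
      rcases hec with ⟨hxu', _⟩ | ⟨hxv, _⟩
      · exact absurd hxu' hxu
      · subst hxv
        exact absurd (Reachable.refl x) ha
    · have hD : (T.deleteEdges {s(u, v')}).Adj x y := by
        rw [deleteEdges_adj]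
        exact ⟨h, by simpa using hec⟩
      have hy : ¬ (T.deleteEdges {s(u, v')}).Reachable v' y := fun hr =>
        ha (hr.trans hD.reachable.symm)
      by_cases hyu : y = u
      · subst hyu
        -- the next edge of P' must be u-v'
        have hnr : ¬ (T.deleteEdges {s(y, v')}).Reachable y b := fun hr =>
          hy (hb.trans hr.symm)
        have hemem : s(y, v') ∈ P'.edges := by
          by_contra hnot
          exact hnr (reach_del_of_mem_support P' hnot P'.start_mem_support)
        cases P' with
        | nil => simp at hemem
        | @cons _ z _ h2 P'' =>
          have hzv : z = v' := by
            rw [Walk.edges_cons, List.mem_cons] at hemem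
            rcases hemem with hfirst | hrest
            · rw [Sym2.eq_iff] at hfirst
              rcases hfirst with ⟨-, h2'⟩ | ⟨-, h2''⟩
              · exact h2'.symm
              · exact absurd h2''.symm hv'.ne
            · exfalso
              have hu : y ∉ P''.support :=
                ((Walk.cons_isPath_iff _ _).mp ((Walk.cons_isPath_iff _ _).mp hp).1).2
              exact hu (P''.fst_mem_support_of_mem_edges hrest)
          subst hzv
          have hA := ((adm_cons_cons_iff h h2 P'').mp hadm).1
          refine ⟨x, h, Walk.nil, ?_, ?_, hA⟩
          · rw [Walk.concat_nil]
            rw [Walk.cons_isPath_iff]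
            exact ⟨Walk.IsPath.nil, by simpa using hxu⟩
          · intro zz hzz
            rw [Walk.concat_nil, Walk.support_cons] at hzz
            simp only [Walk.support_nil, List.mem_cons, List.mem_singleton] at hzz
            rcases hzz with rfl | rfl | h'
            · exact Walk.start_mem_support _
            · rw [Walk.support_cons]; right; exact Walk.start_mem_support _
            · exact absurd h' (by simp)
      · obtain ⟨w, hw, q1, hpath, hsub, hA⟩ :=
          ih ((Walk.cons_isPath_iff _ _).mp hp).1 (adm_tail hadm) hy hb hyu
        refine ⟨w, hw, Walk.cons h q1, ?_, ?_, hA⟩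
        · rw [Walk.concat_cons, Walk.cons_isPath_iff]
          refine ⟨hpath, fun hmem => ?_⟩
          exact ((Walk.cons_isPath_iff _ _).mp hp).2 (hsub x hmem)
        · intro zz hzz
          rw [Walk.concat_cons, Walk.support_cons] at hzz
          rw [Walk.support_cons]
          rcases hzz with _ | hzz'
          · exact List.mem_cons_self
          · exact List.mem_cons_of_mem _ (hsub zz (by assumption))

lemma crossing_pair {α : Type*} {G : SimpleGraph α} {Q : α → Prop} :
    ∀ {a b : α} (p : G.Walk a b), ¬ Q a → Q b → ∃ x y, G.Adj x y ∧ ¬ Q x ∧ Q y := by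
  intro a b p
  induction p with
  | nil => exact fun h1 h2 => absurd h2 h1
  | @cons x y b h p ih =>
    intro ha hb
    by_cases hy : Q y
    · exact ⟨x, y, h, ha, hy⟩
    · exact ih hy hb

lemma isPath_append {a b c : V} (p : T.Walk a b) (r : T.Walk b c) (hr : r.IsPath) :
    p.IsPath → (∀ z, z ∈ p.support → z ∈ r.support → z = b) →
    (p.append r).IsPath := by
  induction p with
  | nil => intro _ _; simpa using hr
  | @cons x y b h p ih =>
    intro hp hdisj
    rw [Walk.cons_append, Walk.cons_isPath_iff]
    have hp' := (Walk.cons_isPath_iff _ _).mp hp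
    constructor
    · exact ih r hr hp'.1 fun z hz1 hz2 => hdisj z (by rw [Walk.support_cons]; exact List.mem_cons_of_mem _ hz1) hz2
    · intro hmem
      rw [Walk.mem_support_append_iff] at hmem
      rcases hmem with hmem | hmem
      · exact hp'.2 hmem
      · have : x = b := hdisj x (by rw [Walk.support_cons]; exact List.mem_cons_self) hmem
        exact hp'.2 (this ▸ p.end_mem_support)


lemma acc_symm {a b : V} (h : Accessible T F a b) : Accessible T F b a := by
  obtain ⟨p, hp, ha⟩ := h
  exact ⟨p.reverse, hp.reverse, adm_reverse ha⟩


/-- let `l` be a leaf, `u` an `l`-accessible node reached from `l`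
through the edge `vu`, and `uv'` another tree-edge at `u`.  Then the markers of
`uv` and `uv'` are adjacent in the label of `u` iff the subtree of `T - uv'`
containing `v'` contains an `l`-accessible leaf. -/
theorem stmt2 [Fintype V] (T : SimpleGraph V) (hT : T.IsTree)
    (F : ∀ v : V, SimpleGraph (T.neighborSet v))
    (hconn : (accGraph T F).Connected)
    (l u v v' : V) (hl : IsLeaf T l)
    (hv : T.Adj v u) (hv' : T.Adj u v') (hne : v' ≠ v)
    (q : T.Walk l v) (hq : (q.concat hv).IsPath)
    (hadm : Admissible T F (q.concat hv)) :
    (F u).Adj ⟨v, hv.symm⟩ ⟨v', hv'⟩ ↔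
      ∃ l' : V, IsLeaf T l' ∧ Accessible T F l l' ∧
        (T.deleteEdges {s(u, v')}).Reachable v' l' := by

  classical
  have hqe : s(u, v') ∉ (q.concat hv).edges := edge_not_mem_of_isPath_concat q hv hv' hne hq
  have hnR : ¬ (T.deleteEdges {s(u, v')}).Reachable u v' := del_not_reach hT hv'
  have hlu : (T.deleteEdges {s(u, v')}).Reachable l u :=
    reach_del_of_mem_support (q.concat hv) hqe ((q.concat hv).start_mem_support)
  have hlnot : ¬ (T.deleteEdges {s(u, v')}).Reachable v' l := fun hr =>
    hnR (hr.trans hlu).symm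
  constructor
  · intro hA
    obtain ⟨m, hmleaf, hmreach⟩ := leaf_in_comp hT
      ({z | (T.deleteEdges {s(u, v')}).Reachable v' z}.ncard) u v' hv' le_rfl
    obtain ⟨pw⟩ := hconn.preconnected ⟨l, hl⟩ ⟨m, hmleaf⟩
    obtain ⟨x, y, hxy, hqx, hqy⟩ := crossing_pair
      (Q := fun z : {w : V // IsLeaf T w} => (T.deleteEdges {s(u, v')}).Reachable v' ↑z)
      pw hlnot hmreach
    simp only [accGraph, fromRel_adj] at hxy
    obtain ⟨hxyne, hacc⟩ := hxy
    have hacc' : Accessible T F ↑x ↑y := hacc.elim id (fun h => acc_symm h)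
    obtain ⟨P, hPpath, hPadm⟩ := hacc'
    obtain ⟨r, hradm, hrpath, hrfree⟩ := cross_lemma hv' P hPpath hPadm hqx hqy
    refine ⟨↑y, y.2, ⟨(q.concat hv).append (Walk.cons hv' r), ?_, ?_⟩, ?_⟩
    · apply isPath_append _ _ hrpath hq
      intro z hz1 hz2
      by_contra hzu
      rw [Walk.support_cons] at hz2
      rcases List.mem_cons.mp hz2 with rfl | hz2'
      · exact hzu rfl
      · have h1 : (T.deleteEdges {s(u, v')}).Reachable z u :=
          reach_del_of_mem_support _ hqe hz1
        have h2 : (T.deleteEdges {s(u, v')}).Reachable v' z :=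
          reach_del_of_mem_support' r hrfree hz2'
        exact hnR (h2.trans h1).symm
    · exact (adm_append_iff q hv hv' r).mpr ⟨hadm, hA, hradm⟩
    · exact reach_del_of_mem_support' r hrfree r.end_mem_support
  · rintro ⟨l', hleaf', ⟨R, hRpath, hRadm⟩, hreach⟩
    have hlu2 : l ≠ u := by
      have hnod := hq.support_nodup
      rw [Walk.support_concat] at hnod
      have hu : u ∉ q.support := fun hm =>
        (List.disjoint_of_nodup_append hnod) hm (by simp)
      exact fun h => hu (h ▸ q.start_mem_support)
    obtain ⟨w, hw, q1, hq1path, -, hA⟩ := back_lemma hv' R hRpath hRadm hlnot hreach hlu2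
    obtain ⟨p0, -, hup⟩ := hT.existsUnique_path l u
    have heq : q1.concat hw = q.concat hv := (hup _ hq1path).trans (hup _ hq).symm
    obtain ⟨hwv, -⟩ := Walk.concat_inj heq
    subst hwv
    exact hA
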